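/- Let T be an invertible real N×N matrix and let A : S^N → S^N be the linear map on symmetric matrices that zeros out all entries outside a fixed block-diagonal pattern (A is symmetric: tr(A(X)Y) = tr(X A(Y)), and A is idempotent). Define the cone P = {X ∈ S^N : A(T X T^T) ⪰ 0}. Then the dual cone of P with respect to the trace inner product is P* = {T^T A(Y) T : Y ∈ S^N, Y ⪰ 0}. -/

import Mathlib

open Matrix

private lemma trace_psd_nonneg {N : ℕ} {P : Matrix (Fin N) (Fin N) ℝ}
    (hP : P.PosSemidef) : 0 ≤ P.trace := by
  rw [Matrix.trace]
  apply Finset.sum_nonneg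
  intro i _
  have := hP.dotProduct_mulVec_nonneg (Pi.single i 1)
  simpa [Matrix.mulVec_single, single_dotProduct, Matrix.diag] using this

open scoped MatrixOrder Matrix.Norms.L2Operator in
private lemma trace_mul_psd_nonneg {N : ℕ} {P Q : Matrix (Fin N) (Fin N) ℝ}
    (hP : P.PosSemidef) (hQ : Q.PosSemidef) : 0 ≤ (P * Q).trace := by
  obtain ⟨B, hB⟩ := CStarAlgebra.nonneg_iff_eq_star_mul_self.mp hQ.nonneg
  rw [hB, Matrix.star_eq_conjTranspose]
  have h1 : (P * (Bᴴ * B)).trace = (B * P * Bᴴ).trace := by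
    rw [← Matrix.mul_assoc, Matrix.trace_mul_comm, ← Matrix.mul_assoc]
  rw [h1]
  exact trace_psd_nonneg (hP.mul_mul_conjTranspose_same B)

private lemma psd_of_symm_trace {N : ℕ} {W : Matrix (Fin N) (Fin N) ℝ}
    (hW : W.IsSymm)
    (h : ∀ S : Matrix (Fin N) (Fin N) ℝ, S.PosSemidef → 0 ≤ (W * S).trace) :
    W.PosSemidef := by
  refine Matrix.PosSemidef.of_dotProduct_mulVec_nonneg ?_ ?_
  · rwa [Matrix.IsHermitian, Matrix.conjTranspose_eq_transpose_of_trivial]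
  · intro x
    have hpsd : (Matrix.vecMulVec x x).PosSemidef := by
      refine Matrix.PosSemidef.of_dotProduct_mulVec_nonneg ?_ ?_
      · rw [Matrix.IsHermitian, Matrix.conjTranspose_eq_transpose_of_trivial]
        ext i j
        simp [Matrix.vecMulVec_apply, mul_comm]
      · intro y
        have : (star y) ⬝ᵥ (Matrix.vecMulVec x x) *ᵥ y = (x ⬝ᵥ y) * (x ⬝ᵥ y) := by
          simp [dotProduct, Matrix.mulVec, Matrix.vecMulVec_apply,
            Finset.mul_sum, Finset.sum_mul]
          rw [Finset.sum_comm]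
          congr 1; ext i
          congr 1; ext j
          ring
        rw [this]
        exact mul_self_nonneg _
    have := h _ hpsd
    have heq : ((W * Matrix.vecMulVec x x)).trace = (star x) ⬝ᵥ W *ᵥ x := by
      simp [Matrix.trace, Matrix.diag, Matrix.mul_apply, Matrix.vecMulVec_apply,
        dotProduct, Matrix.mulVec, Finset.mul_sum]
      congr 1; ext i
      congr 1; ext j
      ring
    rwa [heq] at this

private lemma eq_zero_of_symm_trace_sq {N : ℕ} {M : Matrix (Fin N) (Fin N) ℝ}
    (hM : M.IsSymm) (h : (M * M).trace = 0) : M = 0 := by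
  have hsum : ∑ i, ∑ j, (M i j) ^ 2 = 0 := by
    rw [← h]
    simp only [Matrix.trace, Matrix.diag, Matrix.mul_apply]
    congr 1; ext i
    congr 1; ext j
    rw [sq]
    congr 1
    exact congrFun (congrFun hM j) i
  ext i j
  have h1 : ∀ i ∈ Finset.univ, (0:ℝ) ≤ ∑ j, (M i j)^2 := fun i _ =>
    Finset.sum_nonneg fun j _ => sq_nonneg _
  have h2 := (Finset.sum_eq_zero_iff_of_nonneg h1).mp hsum i (Finset.mem_univ i)
  have h3 := (Finset.sum_eq_zero_iff_of_nonneg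
    (fun j _ => sq_nonneg (M i j))).mp h2 j (Finset.mem_univ j)
  simpa using pow_eq_zero_iff (n := 2) (by norm_num) |>.mp h3

/-- for an invertible `T` and a self-adjoint idempotent
positivity-preserving projection `A` onto block-diagonal symmetric matrices, the cone
`P = {X symmetric : A(T X Tᵀ) ⪰ 0}` has dual cone (w.r.t. the trace inner product on
symmetric matrices) `P* = {Tᵀ A(Y) T : Y ⪰ 0}`. -/
theorem stmt12 {N : ℕ} (T : Matrix (Fin N) (Fin N) ℝ) (hT : IsUnit T.det)
    (A : Matrix (Fin N) (Fin N) ℝ →ₗ[ℝ] Matrix (Fin N) (Fin N) ℝ)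
    (hAsym : ∀ X Y : Matrix (Fin N) (Fin N) ℝ, (A X * Y).trace = (X * A Y).trace)
    (hAidem : ∀ X : Matrix (Fin N) (Fin N) ℝ, A (A X) = A X)
    (hApsd : ∀ X : Matrix (Fin N) (Fin N) ℝ, X.PosSemidef → (A X).PosSemidef)
    (hAsymm : ∀ X : Matrix (Fin N) (Fin N) ℝ, X.IsSymm → (A X).IsSymm) :
    {Z : Matrix (Fin N) (Fin N) ℝ | Z.IsSymm ∧
        ∀ X : Matrix (Fin N) (Fin N) ℝ, X.IsSymm → (A (T * X * Tᵀ)).PosSemidef →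
          0 ≤ (Z * X).trace}
      = {Z | ∃ Y : Matrix (Fin N) (Fin N) ℝ, Y.PosSemidef ∧ Z = Tᵀ * A Y * T} := by
  have hTT : T * T⁻¹ = 1 := Matrix.mul_nonsing_inv T hT
  have hTT' : T⁻¹ * T = 1 := Matrix.nonsing_inv_mul T hT
  ext Z
  simp only [Set.mem_setOf_eq]
  constructor
  · rintro ⟨hZs, hZ⟩
    set W : Matrix (Fin N) (Fin N) ℝ := (T⁻¹)ᵀ * Z * T⁻¹ with hWdef
    have hWs : W.IsSymm := by
      rw [Matrix.IsSymm] at hZs ⊢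
      simp [hWdef, Matrix.transpose_mul, Matrix.mul_assoc, hZs]
    -- key: W in the dual of {S symm : A S psd}
    have key : ∀ S : Matrix (Fin N) (Fin N) ℝ, S.IsSymm → (A S).PosSemidef →
        0 ≤ (W * S).trace := by
      intro S hSs hSpsd
      set X : Matrix (Fin N) (Fin N) ℝ := T⁻¹ * S * (T⁻¹)ᵀ with hXdef
      have hXs : X.IsSymm := by
        rw [Matrix.IsSymm] at hSs ⊢
        simp [hXdef, Matrix.transpose_mul, Matrix.mul_assoc, hSs]
      have hTX : T * X * Tᵀ = S := by
        have h2 : (T⁻¹)ᵀ * Tᵀ = 1 := by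
          rw [← Matrix.transpose_mul, hTT, Matrix.transpose_one]
        calc T * (T⁻¹ * S * (T⁻¹)ᵀ) * Tᵀ
            = (T * T⁻¹) * S * ((T⁻¹)ᵀ * Tᵀ) := by
              simp only [Matrix.mul_assoc]
          _ = S := by rw [hTT, h2, Matrix.one_mul, Matrix.mul_one]
      have := hZ X hXs (by rw [hTX]; exact hSpsd)
      have htr : (Z * X).trace = (W * S).trace := by
        rw [hWdef, hXdef]
        rw [show Z * (T⁻¹ * S * (T⁻¹)ᵀ) = (Z * T⁻¹ * S) * (T⁻¹)ᵀ by
          simp only [Matrix.mul_assoc]]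
        rw [Matrix.trace_mul_comm]
        rw [show (T⁻¹)ᵀ * (Z * T⁻¹ * S) = ((T⁻¹)ᵀ * Z * T⁻¹) * S by
          simp only [Matrix.mul_assoc]]
      rwa [htr] at this
    -- A W = W
    have hAW : A W = W := by
      have horth : ∀ X : Matrix (Fin N) (Fin N) ℝ, X.IsSymm →
          (W * X).trace = (W * A X).trace := by
        intro X hX
        have hS : A (X - A X) = 0 := by
          simp [map_sub, hAidem]
        have hSsymm : (X - A X).IsSymm := hX.sub (hAsymm X hX)
        have h1 := key (X - A X) hSsymm (by rw [hS]; exact Matrix.PosSemidef.zero)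
        have h2 := key (-(X - A X)) (by rw [Matrix.IsSymm, Matrix.transpose_neg]; rw [Matrix.IsSymm] at hSsymm; rw [hSsymm])
          (by rw [map_neg, hS, neg_zero]; exact Matrix.PosSemidef.zero)
        have h3 : (W * (X - A X)).trace = 0 := by
          have : (W * -(X - A X)).trace = -(W * (X - A X)).trace := by
            rw [Matrix.mul_neg, Matrix.trace_neg]
          rw [this] at h2
          linarith
        have : (W * X - W * A X).trace = 0 := by rwa [← Matrix.mul_sub]
        rw [Matrix.trace_sub] at this
        linarith
      set M : Matrix (Fin N) (Fin N) ℝ := W - A W with hMdef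
      have hMs : M.IsSymm := hWs.sub (hAsymm W hWs)
      have hMM : (M * M).trace = 0 := by
        have hMsymm : M.IsSymm := hMs
        have e1 : (M * M).trace = (W * M).trace - (A W * M).trace := by
          rw [hMdef, Matrix.sub_mul, Matrix.trace_sub]
        have e2 : (A W * M).trace = (W * A M).trace := hAsym W M
        have e3 : (W * M).trace = (W * A M).trace := horth M hMs
        rw [e1, e2, ← e3]
        ring
      have hzero : W - A W = 0 := eq_zero_of_symm_trace_sq hMs hMM
      rw [sub_eq_zero] at hzero
      exact hzero.symm
    -- W PSD
    have hWpsd : W.PosSemidef := by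
      apply psd_of_symm_trace hWs
      intro S hS
      exact key S (by rw [Matrix.IsSymm, ← Matrix.conjTranspose_eq_transpose_of_trivial]; exact hS.1)
        (hApsd S hS)
    refine ⟨W, hWpsd, ?_⟩
    rw [hAW, hWdef]
    have h2 : Tᵀ * (T⁻¹)ᵀ = 1 := by
      rw [← Matrix.transpose_mul, hTT', Matrix.transpose_one]
    calc Z = (Tᵀ * (T⁻¹)ᵀ) * Z * (T⁻¹ * T) := by rw [h2, hTT', Matrix.one_mul, Matrix.mul_one]
      _ = Tᵀ * ((T⁻¹)ᵀ * Z * T⁻¹) * T := by simp only [Matrix.mul_assoc]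
  · rintro ⟨Y, hY, rfl⟩
    have hYs : Y.IsSymm := by
      rw [Matrix.IsSymm, ← Matrix.conjTranspose_eq_transpose_of_trivial]; exact hY.1
    have hAYs : (A Y).IsSymm := hAsymm Y hYs
    constructor
    · rw [Matrix.IsSymm] at hAYs ⊢
      simp [Matrix.transpose_mul, Matrix.mul_assoc, hAYs]
    · intro X hX hpsd
      have htr : (Tᵀ * A Y * T * X).trace = (Y * A (T * X * Tᵀ)).trace := by
        rw [show Tᵀ * A Y * T * X = Tᵀ * (A Y * T * X) by simp only [Matrix.mul_assoc]]
        rw [Matrix.trace_mul_comm]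
        rw [show A Y * T * X * Tᵀ = A Y * (T * X * Tᵀ) by simp only [Matrix.mul_assoc]]
        exact hAsym Y (T * X * Tᵀ)
      rw [htr]
      exact trace_mul_psd_nonneg hY hpsd
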